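/- Define F, G : ℕ × ℕ → ℝ by F(n, k) = (-1)^k · (k!)² · (2n-k-1)! / ((2n+k+1)! · (k+1)) and G(n, k) = (-1)^k · (k!)² · (2n-k)! · (4n+3) · (4n² + 6n + k + 3) / (2 · (2n+k+2)! · (n+1)² · (2n+1)²), where the factorials are natural-number factorials. Then for all n, k ∈ ℕ with k < 2n, the WZ relation holds: F(n+1, k) - F(n, k) = G(n, k+1) - G(n, k). -/

import Mathlib

/-- The s=2 WZ pair: with
F(n,k) = (-1)^k (k!)² (2n-k-1)! / ((2n+k+1)! (k+1)) and
G(n,k) = (-1)^k (k!)² (2n-k)! (4n+3)(4n²+6n+k+3) / (2 (2n+k+2)! (n+1)² (2n+1)²),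
the WZ relation holds for all k < 2n. -/
theorem wz_pair_s2 (F G : ℕ → ℕ → ℝ)
    (hF : ∀ n k : ℕ, F n k =
      (-1 : ℝ) ^ k * ((k.factorial : ℝ)) ^ 2 * ((2 * n - k - 1).factorial : ℝ) /
        (((2 * n + k + 1).factorial : ℝ) * ((k : ℝ) + 1)))
    (hG : ∀ n k : ℕ, G n k =
      (-1 : ℝ) ^ k * ((k.factorial : ℝ)) ^ 2 * ((2 * n - k).factorial : ℝ) *
          (4 * (n : ℝ) + 3) * (4 * (n : ℝ) ^ 2 + 6 * (n : ℝ) + (k : ℝ) + 3) /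
        (2 * ((2 * n + k + 2).factorial : ℝ) * ((n : ℝ) + 1) ^ 2 *
          (2 * (n : ℝ) + 1) ^ 2)) :
    ∀ n k : ℕ, k < 2 * n → F (n + 1) k - F n k = G n (k + 1) - G n k := by
  intro n k hk
  rw [hF, hF, hG, hG]
  have h1 : 2 * (n + 1) - k - 1 = (2 * n - k - 1) + 2 := by omega
  have h2 : 2 * n - k = (2 * n - k - 1) + 1 := by omega
  have h3 : 2 * n - (k + 1) = 2 * n - k - 1 := by omega
  have h4 : 2 * (n + 1) + k + 1 = (2 * n + k + 1) + 2 := by omega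
  have h5 : 2 * n + (k + 1) + 2 = (2 * n + k + 1) + 2 := by omega
  have h6 : 2 * n + k + 2 = (2 * n + k + 1) + 1 := by omega
  rw [h1, h2, h3, h4, h5, h6]
  set a : ℕ := 2 * n - k - 1 with ha
  set b : ℕ := 2 * n + k + 1 with hb
  have hab : (a : ℝ) = 2 * n - k - 1 := by
    have h : (a : ℤ) = 2 * n - k - 1 := by omega
    have h2 := congrArg (fun z : ℤ => (z : ℝ)) h
    push_cast at h2
    linarith
  simp only [Nat.factorial_succ]
  have hA : ((a.factorial : ℝ)) ≠ 0 := Nat.cast_ne_zero.2 a.factorial_ne_zero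
  have hB : ((b.factorial : ℝ)) ≠ 0 := Nat.cast_ne_zero.2 b.factorial_ne_zero
  have hK : ((k.factorial : ℝ)) ≠ 0 := Nat.cast_ne_zero.2 k.factorial_ne_zero
  have hk1 : (k : ℝ) + 1 ≠ 0 := by positivity
  have hk2 : (k : ℝ) + 2 ≠ 0 := by positivity
  have hn1 : (n : ℝ) + 1 ≠ 0 := by positivity
  have hn2 : 2 * (n : ℝ) + 1 ≠ 0 := by positivity
  have hC : (((2 * n + k).factorial : ℕ) : ℝ) ≠ 0 :=
    Nat.cast_ne_zero.2 (2 * n + k).factorial_ne_zero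
  push_cast
  rw [hab]
  have hs1 : 2 * (n : ℝ) + (k : ℝ) + 1 ≠ 0 := by positivity
  have hs2 : 2 * (n : ℝ) + (k : ℝ) + 2 ≠ 0 := by positivity
  have hs3 : 2 * (n : ℝ) + (k : ℝ) + 3 ≠ 0 := by positivity
  field_simp
  have hbb : (b : ℝ) = 2 * n + k + 1 := by rw [hb]; push_cast; ring
  rw [hbb]
  ring
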